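/- Let E be a meet-semilattice with bottom ⊥, B a generalized Boolean algebra, and π : E → B a representation such that π(E) generates B as a generalized Boolean algebra. Let X_π be the set of pairs (e, F) ∈ E × Finset E such that π(e) = ⨆_{f ∈ F} π(f). If φ : E → Bool is an X_π-to-join character of E, then there exists a map ψ : B → Bool which is not identically false and preserves ⊥, binary meets, binary joins and relative complements (an ultra character of B), such that φ = ψ ∘ π. (Lemma 3.5.) -/
import Mathlib


/-- Lemma 3.5.  If `π : E → B` is a representation of a meet-semilattice
with bottom in a generalized Boolean algebra whose image generates `B`, then every
`X_π`-to-join character of `E` factors through an ultra character of `B`. -/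
theorem statement1 {E B : Type*} [SemilatticeInf E] [OrderBot E]
    [GeneralizedBooleanAlgebra B]
    (π : E → B)
    (hbot : π ⊥ = ⊥)
    (hinf : ∀ x y : E, π (x ⊓ y) = π x ⊓ π y)
    (hgen : ∀ T : Set B, (∀ e : E, π e ∈ T) → ⊥ ∈ T →
      (∀ a ∈ T, ∀ b ∈ T, a ⊔ b ∈ T ∧ a ⊓ b ∈ T ∧ a \ b ∈ T) → T = Set.univ)
    (φ : E → Bool)
    (hφbot : φ ⊥ = false)
    (hφinf : ∀ x y : E, φ (x ⊓ y) = (φ x && φ y))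
    (hφne : ∃ x : E, φ x = true)
    (hφX : ∀ (e : E) (F : Finset E), π e = F.sup π →
      (φ e = true ↔ ∃ f ∈ F, φ f = true)) :
    ∃ ψ : B → Bool,
      (∃ b : B, ψ b = true) ∧
      ψ ⊥ = false ∧
      (∀ a b : B, ψ (a ⊓ b) = (ψ a && ψ b)) ∧
      (∀ a b : B, ψ (a ⊔ b) = (ψ a || ψ b)) ∧
      (∀ a b : B, ψ (a \ b) = (ψ a && !ψ b)) ∧
      ∀ e : E, φ e = ψ (π e) := by
  classical
  obtain ⟨x₀, hx₀⟩ := hφne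
  -- the candidate ultrafilter
  set P : B → Prop := fun b => ∃ (x : E) (Y : Finset E), φ x = true ∧
      (∀ y ∈ Y, φ y = false) ∧ π x \ Y.sup π ≤ b with hP
  have hup : ∀ a b : B, P a → a ≤ b → P b := by
    rintro a b ⟨x, Y, hx, hY, hle⟩ hab
    exact ⟨x, Y, hx, hY, hle.trans hab⟩
  have hmeet : ∀ a b : B, P a → P b → P (a ⊓ b) := by
    rintro a b ⟨x, Y, hx, hY, hle⟩ ⟨x', Y', hx', hY', hle'⟩
    refine ⟨x ⊓ x', Y ∪ Y', by simp [hφinf, hx, hx'], ?_, ?_⟩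
    · intro y hy
      rcases Finset.mem_union.mp hy with h | h
      · exact hY y h
      · exact hY' y h
    · rw [hinf, Finset.sup_union]
      refine le_inf ?_ ?_
      · exact (sdiff_le_sdiff inf_le_left le_sup_left).trans hle
      · exact (sdiff_le_sdiff inf_le_right le_sup_right).trans hle'
  -- if `φ x = true` and `π x ≤ Y.sup π` then some `y ∈ Y` has `φ (x ⊓ y) = true`
  have hcover : ∀ (x : E) (Y : Finset E), φ x = true → π x ≤ Y.sup π →
      ∃ y ∈ Y, φ (x ⊓ y) = true := by
    intro x Y hx hle
    have hrepr : π x = (Y.image (fun y => x ⊓ y)).sup π := by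
      rw [Finset.sup_image]
      have : π x = π x ⊓ Y.sup π := (inf_eq_left.mpr hle).symm
      rw [this, Finset.sup_inf_distrib_left]
      exact Finset.sup_congr rfl (fun y _ => (hinf x y).symm)
    obtain ⟨f, hf, hfφ⟩ := (hφX _ _ hrepr).mp hx
    obtain ⟨y, hy, rfl⟩ := Finset.mem_image.mp hf
    exact ⟨y, hy, hfφ⟩
  have hnbot : ¬ P ⊥ := by
    rintro ⟨x, Y, hx, hY, hle⟩
    have hle' : π x ≤ Y.sup π := sdiff_eq_bot_iff.mp (le_bot_iff.mp hle)
    obtain ⟨y, hy, hxy⟩ := hcover x Y hx hle'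
    rw [hφinf, hx, hY y hy] at hxy
    simp at hxy
  have hbase : ∀ e : E, φ e = true → P (π e) := fun e he =>
    ⟨e, ∅, he, by simp, by simp⟩
  have hrep : ∀ e : E, P (π e) → φ e = true := by
    rintro e ⟨x, Y, hx, hY, hle⟩
    have hle' : π x ≤ (insert e Y).sup π := by
      rw [Finset.sup_insert, sup_comm]
      exact sdiff_le_iff.mp hle
    obtain ⟨y, hy, hxy⟩ := hcover x (insert e Y) hx hle'
    rcases Finset.mem_insert.mp hy with rfl | hy
    · rw [hφinf, hx] at hxy; simpa using hxy
    · rw [hφinf, hx, hY y hy] at hxy; simp at hxy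
  -- key dichotomy, via generation
  have hkey : ∀ b : B, P b ∨ ∃ c : B, P c ∧ c ⊓ b = ⊥ := by
    intro b
    set T : Set B := {b | P b ∨ ∃ c : B, P c ∧ c ⊓ b = ⊥} with hT
    have hTuniv : T = Set.univ := by
      apply hgen
      · intro e
        by_cases he : φ e = true
        · exact Or.inl (hbase e he)
        · refine Or.inr ⟨π x₀ \ π e, ⟨x₀, {e}, hx₀, ?_, by simp⟩, ?_⟩
          · intro y hy
            rw [Finset.mem_singleton.mp hy]
            simpa using he
          · exact disjoint_iff.mp disjoint_sdiff_self_left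
      · exact Or.inr ⟨π x₀, hbase x₀ hx₀, inf_bot_eq _⟩
      · rintro a (ha | ⟨c, hc, hca⟩) b' hb'
        · rcases hb' with hb' | ⟨c', hc', hcb'⟩
          · exact ⟨Or.inl (hup _ _ ha le_sup_left),
              Or.inl (hmeet _ _ ha hb'),
              Or.inr ⟨a ⊓ b', hmeet _ _ ha hb',
                disjoint_iff.mp (disjoint_sdiff_self_right.mono_left inf_le_right)⟩⟩
          · refine ⟨Or.inl (hup _ _ ha le_sup_left),
              Or.inr ⟨c', hc', ?_⟩,
              Or.inl (hup _ _ (hmeet _ _ ha hc') ?_)⟩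
            · exact le_bot_iff.mp <| calc c' ⊓ (a ⊓ b') ≤ c' ⊓ b' := inf_le_inf_left _ inf_le_right
                _ = ⊥ := hcb'
              -- need equality; handled below
            · refine le_sdiff.mpr ⟨inf_le_left, ?_⟩
              rw [disjoint_iff]
              exact le_bot_iff.mp ((inf_le_inf_right _ inf_le_right).trans hcb'.le)
        · rcases hb' with hb' | ⟨c', hc', hcb'⟩
          · refine ⟨Or.inl (hup _ _ hb' le_sup_right),
              Or.inr ⟨c, hc, ?_⟩,
              Or.inr ⟨c, hc, ?_⟩⟩
            · exact le_bot_iff.mp <| calc c ⊓ (a ⊓ b') ≤ c ⊓ a := inf_le_inf_left _ inf_le_left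
                _ = ⊥ := hca
            · exact le_bot_iff.mp <| calc c ⊓ (a \ b') ≤ c ⊓ a := inf_le_inf_left _ sdiff_le
                _ = ⊥ := hca
          · refine ⟨Or.inr ⟨c ⊓ c', hmeet _ _ hc hc', ?_⟩,
              Or.inr ⟨c, hc, ?_⟩,
              Or.inr ⟨c, hc, ?_⟩⟩
            · apply le_bot_iff.mp
              rw [inf_sup_left]
              apply sup_le
              · exact (inf_le_inf_right _ inf_le_left).trans hca.le
              · exact (inf_le_inf_right _ inf_le_right).trans hcb'.le
            · exact le_bot_iff.mp <| calc c ⊓ (a ⊓ b') ≤ c ⊓ a := inf_le_inf_left _ inf_le_left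
                _ = ⊥ := hca
            · exact le_bot_iff.mp <| calc c ⊓ (a \ b') ≤ c ⊓ a := inf_le_inf_left _ sdiff_le
                _ = ⊥ := hca
    have : b ∈ T := hTuniv ▸ Set.mem_univ b
    exact this
  have hprime : ∀ a b : B, P (a ⊔ b) → P a ∨ P b := by
    intro a b hab
    rcases hkey a with ha | ⟨c, hc, hca⟩
    · exact Or.inl ha
    · right
      have h1 : P (c ⊓ (a ⊔ b)) := hmeet _ _ hc hab
      have h2 : c ⊓ (a ⊔ b) ≤ b := by
        rw [inf_sup_left, hca]
        simp [inf_le_right]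
      exact hup _ _ h1 h2
  refine ⟨fun b => if P b then true else false, ⟨π x₀, ?_⟩, ?_, ?_, ?_, ?_, ?_⟩
  · simp [hbase x₀ hx₀]
  · simp [hnbot]
  · intro a b
    by_cases ha : P a <;> by_cases hb : P b
    · simp [ha, hb, hmeet a b ha hb]
    · have : ¬ P (a ⊓ b) := fun h => hb (hup _ _ h inf_le_right)
      simp [ha, hb, this]
    · have : ¬ P (a ⊓ b) := fun h => ha (hup _ _ h inf_le_left)
      simp [ha, hb, this]
    · have : ¬ P (a ⊓ b) := fun h => ha (hup _ _ h inf_le_left)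
      simp [ha, hb, this]
  · intro a b
    by_cases ha : P a
    · simp [ha, hup _ _ ha le_sup_left]
    · by_cases hb : P b
      · simp [ha, hb, hup _ _ hb le_sup_right]
      · have : ¬ P (a ⊔ b) := fun h => (hprime a b h).elim ha hb
        simp [ha, hb, this]
  · intro a b
    by_cases hab : P (a \ b)
    · have ha : P a := hup _ _ hab sdiff_le
      have hb : ¬ P b := by
        intro hb
        have := hmeet _ _ hab hb
        rw [disjoint_iff.mp disjoint_sdiff_self_left] at this
        exact hnbot this
      simp [hab, ha, hb]
    · by_cases ha : P a
      · have hb : P b := by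
          have ha' : P (a ⊓ b ⊔ a \ b) := by rw [sup_inf_sdiff]; exact ha
          rcases hprime _ _ ha' with h | h
          · exact hup _ _ h inf_le_right
          · exact absurd h hab
        simp [hab, ha, hb]
      · simp [hab, ha]
  · intro e
    by_cases he : φ e = true
    · simp [he, hbase e he]
    · have : ¬ P (π e) := fun h => he (hrep e h)
      simp [this]
      simpa using he
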